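/- arXiv:1708.02461 — 2 statements merged into one kernel-verified Lean document; each statement's English description precedes it below -/
import Mathlib

section
/- For any real symmetric positive semidefinite 3×3 matrix Θ with trace equal to 3T_tr (T_tr ≥ 0), any ν with −1/2 < ν < 1, any θ with 0 ≤ θ ≤ 1, and any T_δ ≥ T_tr·3/(3+δ) for δ > 0, the matrix 𝒯 = θ·T_δ·Id + (1−θ)·((1−ν)·T_tr·Id + ν·Θ) satisfies kᵀ𝒯k ≥ θ·T_δ·|k|² for all k ∈ ℝ³. -/
open Matrix

lemma quad_le_trace (n : ℕ) (Θ : Matrix (Fin n) (Fin n) ℝ) (hpsd : Θ.PosSemidef)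
    (k : Fin n → ℝ) : k ⬝ᵥ Θ.mulVec k ≤ Θ.trace * ∑ i, (k i)^2 := by
  obtain ⟨B, rfl⟩ : ∃ B : Matrix (Fin n) (Fin n) ℝ, Θ = Bᴴ * B := by
    open scoped MatrixOrder in
    obtain ⟨X, hX, -, rfl⟩ :=
      CFC.exists_sqrt_of_isSelfAdjoint_of_quasispectrumRestricts hpsd.isHermitian
        (QuasispectrumRestricts.nnreal_of_nonneg hpsd.nonneg)
    exact ⟨X, by rw [← Matrix.star_eq_conjTranspose, hX.star_eq]⟩
  have h1 : k ⬝ᵥ (Bᴴ * B).mulVec k = ∑ i, ((B.mulVec k) i)^2 := by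
    rw [← Matrix.mulVec_mulVec, Matrix.conjTranspose_eq_transpose_of_trivial,
      Matrix.mulVec_transpose, dotProduct_comm, ← Matrix.dotProduct_mulVec]
    simp [dotProduct, sq]
  have h2 : (Bᴴ * B).trace = ∑ j, ∑ i, (B i j)^2 := by
    simp [Matrix.trace, Matrix.diag, Matrix.mul_apply, sq,
      Matrix.conjTranspose_eq_transpose_of_trivial, Matrix.transpose_apply]
  rw [h1, h2, Finset.sum_comm, Finset.sum_mul]
  apply Finset.sum_le_sum
  intro i _
  calc ((B.mulVec k) i)^2 = (∑ j, B i j * k j)^2 := by simp [Matrix.mulVec, dotProduct]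
    _ ≤ (∑ j, (B i j)^2) * ∑ j, (k j)^2 := Finset.sum_mul_sq_le_sq_mul_sq _ _ _

theorem stmt_2 (Θ : Matrix (Fin 3) (Fin 3) ℝ) (hsymm : Θ.IsSymm) (hpsd : Θ.PosSemidef)
    (Ttr Tδ ν θ δ : ℝ) (hTtr : 0 ≤ Ttr) (htrace : Θ.trace = 3 * Ttr)
    (hν1 : -(1/2) < ν) (hν2 : ν < 1) (hθ0 : 0 ≤ θ) (hθ1 : θ ≤ 1)
    (hδ : 0 < δ) (hTδ : Ttr * 3 / (3 + δ) ≤ Tδ)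
    (𝒯 : Matrix (Fin 3) (Fin 3) ℝ)
    (h𝒯 : 𝒯 = θ • Tδ • (1 : Matrix (Fin 3) (Fin 3) ℝ)
        + (1 - θ) • ((1 - ν) • Ttr • (1 : Matrix (Fin 3) (Fin 3) ℝ) + ν • Θ)) :
    ∀ k : Fin 3 → ℝ, θ * Tδ * (∑ i, (k i)^2) ≤ k ⬝ᵥ 𝒯.mulVec k := by
  intro k
  have hkk : k ⬝ᵥ k = ∑ i, (k i)^2 := by simp [dotProduct, sq]
  have hQ : k ⬝ᵥ 𝒯.mulVec k
      = θ * Tδ * (∑ i, (k i)^2)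
        + (1 - θ) * ((1 - ν) * Ttr * (∑ i, (k i)^2) + ν * (k ⬝ᵥ Θ.mulVec k)) := by
    subst h𝒯
    simp only [Matrix.add_mulVec, Matrix.smul_mulVec, Matrix.one_mulVec,
      dotProduct_add, dotProduct_smul, smul_eq_mul]
    rw [hkk]; ring
  rw [hQ]
  have hS : 0 ≤ ∑ i, (k i)^2 := Finset.sum_nonneg fun i _ => sq_nonneg _
  have hpos : 0 ≤ (1 - ν) * Ttr * (∑ i, (k i)^2) + ν * (k ⬝ᵥ Θ.mulVec k) := by
    rcases le_or_gt 0 ν with hν | hν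
    · have hq : 0 ≤ k ⬝ᵥ Θ.mulVec k := by simpa using hpsd.dotProduct_mulVec_nonneg k
      have h1 : 0 ≤ (1 - ν) * Ttr := mul_nonneg (by linarith) hTtr
      nlinarith [mul_nonneg (mul_nonneg h1 hS) hν, mul_nonneg hν hq]
    · have hle : k ⬝ᵥ Θ.mulVec k ≤ 3 * Ttr * ∑ i, (k i)^2 := by
        have := quad_le_trace 3 Θ hpsd k
        rwa [htrace] at this
      nlinarith [mul_le_mul_of_nonpos_left hle hν.le, mul_nonneg hTtr hS]
  nlinarith [mul_nonneg (sub_nonneg.mpr hθ1) hpos]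
end

section
/- Under the hypotheses of the previous statement together with T_tr ≤ ((3+δ)/3)·T_δ for some δ > 0, one has kᵀ𝒯k ≤ (1/3)·max{1−ν,1+2ν}·(3 + δ(1−θ))·T_δ·|k|² for all k ∈ ℝ³. -/
open Matrix

theorem aux_arith (M Ttr Tδ ν θ δ S Q : ℝ) (hTtr : 0 ≤ Ttr) (hTδ : 0 ≤ Tδ)
    (hθ0 : 0 ≤ θ) (hθ1 : θ ≤ 1) (hδ : 0 < δ) (hle : Ttr ≤ ((3 + δ) / 3) * Tδ)
    (hM1 : 1 ≤ M) (hMν1 : 1 - ν ≤ M) (hMν2 : 1 + 2 * ν ≤ M)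
    (hS0 : 0 ≤ S) (hQ0 : 0 ≤ Q) (hQ3 : Q ≤ 3 * Ttr * S) :
    θ * Tδ * S + (1 - θ) * ((1 - ν) * Ttr * S + ν * Q) ≤ (1/3) * M * (3 + δ * (1 - θ)) * Tδ * S := by
  have h1θ : 0 ≤ 1 - θ := by linarith
  have hM0 : (0:ℝ) ≤ M := le_trans zero_le_one hM1
  have hint3 : 0 ≤ M * S * (((3 + δ) / 3) * Tδ - Ttr) :=
    mul_nonneg (mul_nonneg hM0 hS0) (sub_nonneg.mpr hle)
  have hmid : (1 - ν) * Ttr * S + ν * Q ≤ M * ((3 + δ) / 3) * (Tδ * S) := by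
    rcases le_total 0 ν with h | h
    · nlinarith [mul_nonneg h (sub_nonneg.mpr hQ3),
        mul_nonneg (mul_nonneg hTtr hS0) (sub_nonneg.mpr hMν2), hint3]
    · nlinarith [mul_nonpos_of_nonpos_of_nonneg h hQ0,
        mul_nonneg (mul_nonneg hTtr hS0) (sub_nonneg.mpr hMν1), hint3]
  nlinarith [mul_le_mul_of_nonneg_left hmid h1θ,
    mul_nonneg (mul_nonneg hθ0 (mul_nonneg hTδ hS0)) (sub_nonneg.mpr hM1)]

theorem stmt_4 (Θ : Matrix (Fin 3) (Fin 3) ℝ) (hsymm : Θ.IsSymm) (hpsd : Θ.PosSemidef)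
    (Ttr Tδ ν θ δ : ℝ) (hTtr : 0 ≤ Ttr) (hTδ : 0 ≤ Tδ) (htrace : Θ.trace = 3 * Ttr)
    (hν1 : -(1/2) < ν) (hν2 : ν < 1) (hθ0 : 0 ≤ θ) (hθ1 : θ ≤ 1)
    (hδ : 0 < δ) (hle : Ttr ≤ ((3 + δ) / 3) * Tδ)
    (𝒯 : Matrix (Fin 3) (Fin 3) ℝ)
    (h𝒯 : 𝒯 = θ • Tδ • (1 : Matrix (Fin 3) (Fin 3) ℝ)
        + (1 - θ) • ((1 - ν) • Ttr • (1 : Matrix (Fin 3) (Fin 3) ℝ) + ν • Θ)) :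
    ∀ k : Fin 3 → ℝ,
      k ⬝ᵥ 𝒯.mulVec k ≤ (1/3) * max (1 - ν) (1 + 2 * ν) * (3 + δ * (1 - θ)) * Tδ * (∑ i, (k i)^2) := by
  intro k
  have hM1 : 1 ≤ max (1 - ν) (1 + 2 * ν) := by
    rcases le_total ν 0 with h | h
    · exact le_trans (by linarith) (le_max_left _ _)
    · exact le_trans (by linarith) (le_max_right _ _)
  have hq : ∀ x : Fin 3 → ℝ, 0 ≤ x ⬝ᵥ Θ.mulVec x := fun x => by
    simpa using hpsd.dotProduct_mulVec_nonneg x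
  have h01 := hq ![k 1, -(k 0), 0]
  have h02 := hq ![k 2, 0, -(k 0)]
  have h12 := hq ![0, k 2, -(k 1)]
  have hQ0 := hq k
  have htr : Θ 0 0 + Θ 1 1 + Θ 2 2 = 3 * Ttr := by
    simpa [Matrix.trace, Fin.sum_univ_three] using htrace
  have hs01 : Θ 1 0 = Θ 0 1 := by
    have := congrFun (congrFun hsymm 0) 1
    simpa [Matrix.transpose_apply] using this
  have hs02 : Θ 2 0 = Θ 0 2 := by
    have := congrFun (congrFun hsymm 0) 2
    simpa [Matrix.transpose_apply] using this
  have hs12 : Θ 2 1 = Θ 1 2 := by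
    have := congrFun (congrFun hsymm 1) 2
    simpa [Matrix.transpose_apply] using this
  simp only [Matrix.mulVec, dotProduct, Fin.sum_univ_three, Matrix.cons_val_zero,
    Matrix.cons_val_one, Matrix.head_cons, Matrix.cons_val_two, Matrix.tail_cons] at h01 h02 h12 hQ0
  have hQ3 : k 0 * (Θ 0 0 * k 0 + Θ 0 1 * k 1 + Θ 0 2 * k 2)
      + k 1 * (Θ 1 0 * k 0 + Θ 1 1 * k 1 + Θ 1 2 * k 2)
      + k 2 * (Θ 2 0 * k 0 + Θ 2 1 * k 1 + Θ 2 2 * k 2)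
      ≤ 3 * Ttr * (k 0 ^ 2 + k 1 ^ 2 + k 2 ^ 2) := by
    nlinarith [h01, h02, h12, htr, hs01, hs02, hs12]
  have hQnn : 0 ≤ k 0 * (Θ 0 0 * k 0 + Θ 0 1 * k 1 + Θ 0 2 * k 2)
      + k 1 * (Θ 1 0 * k 0 + Θ 1 1 * k 1 + Θ 1 2 * k 2)
      + k 2 * (Θ 2 0 * k 0 + Θ 2 1 * k 1 + Θ 2 2 * k 2) := by
    linarith [hQ0]
  have hform : k ⬝ᵥ 𝒯.mulVec k
      = θ * Tδ * (k 0 ^ 2 + k 1 ^ 2 + k 2 ^ 2)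
        + (1 - θ) * ((1 - ν) * Ttr * (k 0 ^ 2 + k 1 ^ 2 + k 2 ^ 2)
          + ν * (k 0 * (Θ 0 0 * k 0 + Θ 0 1 * k 1 + Θ 0 2 * k 2)
            + k 1 * (Θ 1 0 * k 0 + Θ 1 1 * k 1 + Θ 1 2 * k 2)
            + k 2 * (Θ 2 0 * k 0 + Θ 2 1 * k 1 + Θ 2 2 * k 2))) := by
    subst h𝒯
    simp [Matrix.mulVec, dotProduct, Fin.sum_univ_three, Matrix.one_apply,
      Matrix.add_apply, Matrix.smul_apply]
    ring
  have hSsum : (∑ i, (k i)^2) = k 0 ^ 2 + k 1 ^ 2 + k 2 ^ 2 := by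
    simp [Fin.sum_univ_three]
  rw [hform, hSsum]
  exact aux_arith _ _ _ _ _ _ _ _ hTtr hTδ hθ0 hθ1 hδ hle hM1 (le_max_left _ _)
    (le_max_right _ _) (by positivity) hQnn hQ3
end
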